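/- Let p be an odd prime and x, y, z pairwise coprime nonzero integers with x^p + y^p = z^p and p not dividing z. Then there exist integers l and r with x + y = l^p and φ(x, y) = r^p, where φ(x, y) = Σ_{i=0}^{p−1} (−1)^i x^{p−1−i} y^i. (The Barlow–Abel equations.) -/

import Mathlib

/-- The Barlow–Abel equations: if x, y, z are pairwise coprime nonzero
integers with x^p + y^p = z^p and p ∤ z, then x + y and φ(x, y) are both
p-th powers. -/
theorem barlow_abel
    (p : ℕ) (hp : p.Prime) (hpodd : Odd p)
    (x y z : ℤ) (hx : x ≠ 0) (hy : y ≠ 0) (hz : z ≠ 0)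
    (hxy : IsCoprime x y) (hyz : IsCoprime y z) (hxz : IsCoprime x z)
    (hfermat : x ^ p + y ^ p = z ^ p) (hpz : ¬ (p : ℤ) ∣ z) :
    ∃ l r : ℤ, x + y = l ^ p ∧
      (∑ i ∈ Finset.range p, (-1) ^ i * x ^ (p - 1 - i) * y ^ i) = r ^ p := by
  set Φ : ℤ := ∑ i ∈ Finset.range p, (-1) ^ i * x ^ (p - 1 - i) * y ^ i with hΦ
  -- product identity
  have hΦ' : Φ = ∑ i ∈ Finset.range p, (-y) ^ i * x ^ (p - 1 - i) := by
    refine Finset.sum_congr rfl fun i _ => ?_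
    rw [neg_pow]; ring
  have hprod : (x + y) * Φ = z ^ p := by
    have h := geom_sum₂_mul (-y) x p
    rw [← hΦ'] at h
    have hyp : (-y) ^ p = -(y ^ p) := hpodd.neg_pow y
    rw [hyp] at h
    have : (x + y) * Φ = x ^ p + y ^ p := by linarith [h]
    rw [this, hfermat]
  -- Φ ≡ p * x^(p-1)  mod (x+y)
  have hdvd : (x + y) ∣ Φ - (p : ℤ) * x ^ (p - 1) := by
    have heq : Φ - (p : ℤ) * x ^ (p - 1)
        = ∑ i ∈ Finset.range p, ((-1) ^ i * x ^ (p - 1 - i) * y ^ i - x ^ (p - 1)) := by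
      rw [Finset.sum_sub_distrib, Finset.sum_const, Finset.card_range, hΦ]
      ring
    rw [heq]
    refine Finset.dvd_sum fun i hi => ?_
    have hi' : i < p := Finset.mem_range.mp hi
    have hexp : p - 1 - i + i = p - 1 := by omega
    have key : (-1 : ℤ) ^ i * x ^ (p - 1 - i) * y ^ i - x ^ (p - 1)
        = (-1) ^ i * x ^ (p - 1 - i) * (y ^ i - (-x) ^ i) := by
      have h2 : (-1 : ℤ) ^ i * x ^ (p - 1 - i) * (-x) ^ i = x ^ (p - 1) := by
        rw [neg_pow x i,
          show (-1 : ℤ) ^ i * x ^ (p - 1 - i) * ((-1) ^ i * x ^ i)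
            = ((-1 : ℤ) * -1) ^ i * (x ^ (p - 1 - i) * x ^ i) from by
              rw [mul_pow]; ring,
          neg_mul_neg, one_mul, one_pow, one_mul, ← pow_add, hexp]
      rw [mul_sub, h2]
    rw [key]
    have h3 : (x + y) ∣ y ^ i - (-x) ^ i := by
      have := sub_dvd_pow_sub_pow y (-x) i
      rwa [sub_neg_eq_add, add_comm] at this
    exact Dvd.dvd.mul_left h3 _
  -- coprimality of x + y and Φ
  have hcop : IsCoprime (x + y) Φ := by
    rw [Int.isCoprime_iff_gcd_eq_one]
    by_contra hne
    obtain ⟨q, hq, hqdvd⟩ := Nat.exists_prime_and_dvd hne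
    have hq1 : (q : ℤ) ∣ x + y :=
      dvd_trans (Int.natCast_dvd_natCast.mpr hqdvd) (Int.gcd_dvd_left _ _)
    have hq2 : (q : ℤ) ∣ Φ :=
      dvd_trans (Int.natCast_dvd_natCast.mpr hqdvd) (Int.gcd_dvd_right _ _)
    have hqz : (q : ℤ) ∣ z := by
      have : (q : ℤ) ∣ z ^ p := hprod ▸ hq1.mul_right Φ
      exact (Nat.prime_iff_prime_int.mp hq).dvd_of_dvd_pow this
    have hqpx : (q : ℤ) ∣ (p : ℤ) * x ^ (p - 1) := by
      have h4 : (q : ℤ) ∣ Φ - (Φ - (p : ℤ) * x ^ (p - 1)) :=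
        dvd_sub hq2 (hq1.trans hdvd)
      simpa [sub_sub_cancel] using h4
    rcases (Nat.prime_iff_prime_int.mp hq).dvd_mul.mp hqpx with hqp | hqx
    · have hqep : q = p := (Nat.prime_dvd_prime_iff_eq hq hp).mp (Int.natCast_dvd_natCast.mp hqp)
      exact hpz (hqep ▸ hqz)
    · have hqx' : (q : ℤ) ∣ x := (Nat.prime_iff_prime_int.mp hq).dvd_of_dvd_pow hqx
      exact (Nat.prime_iff_prime_int.mp hq).not_unit (hxz.isUnit_of_dvd' hqx' hqz)
  obtain ⟨l, hl⟩ := Int.eq_pow_of_mul_eq_pow_odd_left hcop hpodd hprod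
  obtain ⟨r, hr⟩ := Int.eq_pow_of_mul_eq_pow_odd_right hcop hpodd hprod
  exact ⟨l, r, hl, hr⟩
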